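/- arXiv:1602.02610 — 4 statements merged into one kernel-verified Lean document; each statement's English description precedes it below -/
import Mathlib

section
/- Let G be a connected graph, X a module of G with |X| ≥ 2, and v ∈ V(G) \ X. Then for any two vertices x, y ∈ X, dist_G(v,x) = dist_G(v,y). Consequently, any vertex of G that resolves two distinct vertices of X must itself belong to X. -/
def IsModule {V : Type*} (G : SimpleGraph V) (X : Set V) : Prop :=
  ∀ v ∉ X, (∀ x ∈ X, G.Adj v x) ∨ (∀ x ∈ X, ¬ G.Adj v x)

lemma walk_bound {V : Type*} {G : SimpleGraph V} (hG : G.Connected)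
    {X : Set V} (hX : IsModule G X) {x : V} (hx : x ∈ X) :
    ∀ {v y : V}, v ∉ X → y ∈ X → (p : G.Walk v y) → G.dist v x ≤ p.length := by
  intro v y hv hy p
  induction p with
  | nil => exact absurd hy hv
  | @cons v w y h q ih =>
    by_cases hw : w ∈ X
    · have hvx : G.Adj v x := by
        rcases hX v hv with h1 | h1
        · exact h1 x hx
        · exact absurd h (h1 w hw)
      calc G.dist v x ≤ 1 := le_of_eq (SimpleGraph.dist_eq_one_iff_adj.mpr hvx)
        _ ≤ q.length + 1 := by omega
    · calc G.dist v x ≤ G.dist v w + G.dist w x := hG.dist_triangle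
        _ ≤ 1 + q.length := by
            have := ih hw hy
            have h1 : G.dist v w ≤ 1 := by exact le_of_eq (SimpleGraph.dist_eq_one_iff_adj.mpr h)
            omega
        _ = q.length + 1 := by omega

theorem stmt0 {V : Type*} (G : SimpleGraph V) (hG : G.Connected)
    (X : Set V) (hX : IsModule G X) (hcard : X.Nontrivial)
    (v : V) (hv : v ∉ X) :
    (∀ x ∈ X, ∀ y ∈ X, G.dist v x = G.dist v y) ∧
    (∀ u : V, ∀ x ∈ X, ∀ y ∈ X, x ≠ y → G.dist u x ≠ G.dist u y → u ∈ X) := by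
  have key : ∀ u ∉ X, ∀ x ∈ X, ∀ y ∈ X, G.dist u x = G.dist u y := by
    intro u hu x hx y hy
    have h1 : G.dist u x ≤ G.dist u y := by
      obtain ⟨p, hp⟩ := ((hG u y).exists_walk_length_eq_dist)
      rw [← hp]; exact walk_bound hG hX hx hu hy p
    have h2 : G.dist u y ≤ G.dist u x := by
      obtain ⟨p, hp⟩ := ((hG u x).exists_walk_length_eq_dist)
      rw [← hp]; exact walk_bound hG hX hy hu hx p
    omega
  refine ⟨key v hv, fun u x hx y hy _ hne => ?_⟩
  by_contra hu
  exact hne (key u hu x hx y hy)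
end

section
/- Let G be a connected graph, X a separator of G with diam_G(X) ≤ d, and V₁, V₂ a partition of V(G) \ X with no edges between V₁ and V₂. For v ∈ V₁, define the projection Pr_{v,d}(X) = (X₀,...,X_d) where X_i = {x ∈ X : dist_G(v,x) = dist_G(v,X) + i}. If u, v ∈ V₁ have Pr_{u,d}(X) = Pr_{v,d}(X), then for any two distinct x, y ∈ V₂, u resolves x and y if and only if v resolves x and y. -/
noncomputable def setDist {V : Type*} (G : SimpleGraph V) (S : Set V) (x : V) : ℕ :=
  sInf {m | ∃ u ∈ S, m = G.dist u x}

/-- The `i`-th class of the projection of `v` on `X`. -/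
def projClass {V : Type*} (G : SimpleGraph V) (X : Set V) (v : V) (i : ℕ) : Set V :=
  {x ∈ X | G.dist v x = setDist G X v + i}

private lemma cross_lemma {V : Type*} {G : SimpleGraph V} {X V₁ V₂ : Set V}
    (hpart : V₁ ∪ V₂ = Xᶜ) (hdisj : Disjoint V₁ V₂)
    (hnoedge : ∀ u ∈ V₁, ∀ w ∈ V₂, ¬ G.Adj u w) :
    ∀ {a b : V} (W : G.Walk a b), a ∈ V₁ → b ∈ V₂ → ∃ t ∈ X, t ∈ W.support := by
  intro a b W
  induction W with
  | nil =>
    intro ha hb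
    exact absurd hb (Set.disjoint_left.mp hdisj ha)
  | @cons a w b h W ih =>
    intro ha hb
    by_cases hw : w ∈ X
    · exact ⟨w, hw, by simp [SimpleGraph.Walk.support_cons]⟩
    · have hw' : w ∈ V₁ ∪ V₂ := by rw [hpart]; exact hw
      rcases hw' with hw1 | hw2
      · obtain ⟨t, ht, hts⟩ := ih hw1 hb
        exact ⟨t, ht, by simp [SimpleGraph.Walk.support_cons, hts]⟩
      · exact absurd h (hnoedge a ha w hw2)

theorem stmt3 {V : Type*} (G : SimpleGraph V) (hG : G.Connected)
    (X V₁ V₂ : Set V) (d : ℕ)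
    (hpart : V₁ ∪ V₂ = Xᶜ) (hdisj : Disjoint V₁ V₂)
    (h1 : V₁.Nonempty) (h2 : V₂.Nonempty)
    (hnoedge : ∀ u ∈ V₁, ∀ w ∈ V₂, ¬ G.Adj u w)
    (hdiam : ∀ a ∈ X, ∀ b ∈ X, G.dist a b ≤ d)
    (u v : V) (hu : u ∈ V₁) (hv : v ∈ V₁)
    (hproj : ∀ i ≤ d, projClass G X u i = projClass G X v i) :
    ∀ x ∈ V₂, ∀ y ∈ V₂, x ≠ y →
      (G.dist u x ≠ G.dist u y ↔ G.dist v x ≠ G.dist v y) := by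
  -- X is nonempty
  obtain ⟨x₀, hx₀⟩ := h2
  have hXne : X.Nonempty := by
    obtain ⟨W⟩ := hG u x₀
    obtain ⟨t, ht, -⟩ := cross_lemma hpart hdisj hnoedge W hu hx₀
    exact ⟨t, ht⟩
  -- setDist basic facts
  have hsetne : ∀ w : V, {m | ∃ s ∈ X, m = G.dist s w}.Nonempty := fun w =>
    ⟨G.dist hXne.choose w, hXne.choose, hXne.choose_spec, rfl⟩
  have hsd_le : ∀ (w : V), ∀ t ∈ X, setDist G X w ≤ G.dist w t := by
    intro w t ht
    rw [SimpleGraph.dist_comm]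
    exact Nat.sInf_le ⟨t, ht, rfl⟩
  have hsd_mem : ∀ w : V, ∃ t ∈ X, setDist G X w = G.dist w t := by
    intro w
    obtain ⟨t, ht, h⟩ := Nat.sInf_mem (hsetne w)
    exact ⟨t, ht, by unfold setDist; rw [h, SimpleGraph.dist_comm]⟩
  -- key: projection equality transfers distances
  have key : ∀ t ∈ X, G.dist u t + setDist G X v = G.dist v t + setDist G X u := by
    intro t ht
    have hle : setDist G X u ≤ G.dist u t := hsd_le u t ht
    obtain ⟨t₀, ht₀, ht₀e⟩ := hsd_mem u
    have hi : G.dist u t ≤ setDist G X u + d := by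
      calc G.dist u t ≤ G.dist u t₀ + G.dist t₀ t := hG.dist_triangle
        _ ≤ setDist G X u + d := by
            rw [← ht₀e]; exact Nat.add_le_add_left (hdiam t₀ ht₀ t ht) _
    set i := G.dist u t - setDist G X u with hidef
    have hid : i ≤ d := by omega
    have hmem : t ∈ projClass G X u i := ⟨ht, by omega⟩
    rw [hproj i hid] at hmem
    have := hmem.2
    omega
  -- equality of shifted distances
  have main : ∀ x ∈ V₂, G.dist u x + setDist G X v = G.dist v x + setDist G X u := by
    have half : ∀ a b : V, a ∈ V₁ → b ∈ V₁ → ∀ x ∈ V₂,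
        (∀ t ∈ X, G.dist a t + setDist G X b = G.dist b t + setDist G X a) →
        G.dist a x + setDist G X b ≤ G.dist b x + setDist G X a := by
      classical
      intro a b ha hb x hx hkey
      obtain ⟨W, hW⟩ := (hG b x).exists_walk_length_eq_dist
      obtain ⟨t, ht, hts⟩ := cross_lemma hpart hdisj hnoedge W hb hx
      have hsplit : G.dist b t + G.dist t x ≤ G.dist b x := by
        have := W.take_spec hts
        have hlen : (W.takeUntil t hts).length + (W.dropUntil t hts).length = W.length := by
          rw [← SimpleGraph.Walk.length_append, this]
        calc G.dist b t + G.dist t x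
            ≤ (W.takeUntil t hts).length + (W.dropUntil t hts).length :=
              Nat.add_le_add (SimpleGraph.dist_le _) (SimpleGraph.dist_le _)
          _ = G.dist b x := by rw [hlen, hW]
      have htri : G.dist a x ≤ G.dist a t + G.dist t x := hG.dist_triangle
      have := hkey t ht
      omega
    intro x hx
    have h1' := half u v hu hv x hx key
    have h2' := half v u hv hu x hx (fun t ht => (key t ht).symm)
    omega
  intro x hx y hy _
  have hx' := main x hx
  have hy' := main y hy
  omega
end

section
/- Let G be a connected graph, X a separator of G with diam_G(X) ≤ d, and V₁, V₂ a partition of V(G) \ X with no edges between V₁ and V₂. Then for any v ∈ V₁ and x ∈ V₂, dist_G(v,x) = dist_G(v,X) + min over i ∈ {0,...,d} of (i + dist_G(X_i, x)), where (X₀,...,X_d) is the projection of v on X defined by X_i = {x' ∈ X : dist_G(v,x') = dist_G(v,X) + i}. -/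
theorem stmt4 {V : Type*} (G : SimpleGraph V) (hG : G.Connected)
    (X V₁ V₂ : Set V) (d : ℕ)
    (hpart : V₁ ∪ V₂ = Xᶜ) (hdisj : Disjoint V₁ V₂)
    (h1 : V₁.Nonempty) (h2 : V₂.Nonempty)
    (hnoedge : ∀ u ∈ V₁, ∀ w ∈ V₂, ¬ G.Adj u w)
    (hdiam : ∀ a ∈ X, ∀ b ∈ X, G.dist a b ≤ d) :
    ∀ v ∈ V₁, ∀ x ∈ V₂,
      G.dist v x = setDist G X v +
        sInf {m : ℕ | ∃ i ≤ d, ∃ u ∈ X,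
          G.dist v u = setDist G X v + i ∧ m = i + G.dist u x} := by
  intro v hv x hx
  -- classify vertices
  have hclass : ∀ a : V, a ∈ X ∨ a ∈ V₁ ∨ a ∈ V₂ := by
    intro a
    by_cases h : a ∈ X
    · exact Or.inl h
    · have : a ∈ V₁ ∪ V₂ := hpart ▸ h
      exact Or.inr this
  -- key lemma: any walk from V₁ to x crosses X
  have key : ∀ (a b : V) (p : G.Walk a b), a ∈ V₁ → b ∈ V₂ →
      ∃ u ∈ X, G.dist a u + G.dist u b ≤ p.length := by
    intro a b p
    induction p with
    | nil =>
      intro ha hb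
      exact absurd rfl (hdisj.ne_of_mem ha hb)
    | @cons s c t hadj q ih =>
      intro ha hb
      rcases hclass c with hc | hc | hc
      · refine ⟨c, hc, ?_⟩
        have h1' : G.dist s c ≤ 1 := by
          simpa using SimpleGraph.dist_le (hadj.toWalk)
        have h2' : G.dist c t ≤ q.length := SimpleGraph.dist_le q
        simp only [SimpleGraph.Walk.length_cons]
        omega
      · obtain ⟨u, hu, hle⟩ := ih hc hb
        refine ⟨u, hu, ?_⟩
        have htri : G.dist s u ≤ G.dist s c + G.dist c u := hG.dist_triangle
        have h1' : G.dist s c ≤ 1 := by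
          simpa using SimpleGraph.dist_le (hadj.toWalk)
        simp only [SimpleGraph.Walk.length_cons]
        omega
      · exact absurd hadj (hnoedge s ha c hc)
  -- shortest walk
  obtain ⟨p, hp⟩ := hG.exists_walk_length_eq_dist v x
  obtain ⟨u, hu, hle⟩ := key v x p hv hx
  rw [hp] at hle
  -- setDist basics
  set s := setDist G X v with hs
  have hmem_set : G.dist u v ∈ {m | ∃ w ∈ X, m = G.dist w v} := ⟨u, hu, rfl⟩
  have hsle : ∀ w ∈ X, s ≤ G.dist w v := fun w hw => Nat.sInf_le ⟨w, hw, rfl⟩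
  have hns : ({m | ∃ w ∈ X, m = G.dist w v} : Set ℕ).Nonempty := ⟨_, hmem_set⟩
  obtain ⟨u₀, hu₀, hu₀d⟩ := Nat.sInf_mem hns
  have hu₀d : s = G.dist u₀ v := hu₀d
  -- any w ∈ X : dist v w = s + (dist v w - s), with i ≤ d
  have hidx : ∀ w ∈ X, ∃ i ≤ d, G.dist v w = s + i := by
    intro w hw
    have h1' := hsle w hw
    rw [SimpleGraph.dist_comm] at h1'
    have h2' : G.dist v w ≤ s + d := by
      have htri := hG.dist_triangle (u := v) (v := u₀) (w := w)
      have hd := hdiam u₀ hu₀ w hw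
      have hc : G.dist v u₀ = G.dist u₀ v := SimpleGraph.dist_comm ..
      omega
    exact ⟨G.dist v w - s, by omega, by omega⟩
  set T := {m : ℕ | ∃ i ≤ d, ∃ w ∈ X,
      G.dist v w = s + i ∧ m = i + G.dist w x} with hT
  obtain ⟨i, hid, hvu⟩ := hidx u hu
  have hmemT : (i + G.dist u x) ∈ T := ⟨i, hid, u, hu, hvu, rfl⟩
  have hTne : T.Nonempty := ⟨_, hmemT⟩
  obtain ⟨j, hjd, w, hw, hvw, hinf⟩ := Nat.sInf_mem hTne
  apply le_antisymm
  · -- dist v x ≤ s + sInf T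
    calc G.dist v x ≤ G.dist v w + G.dist w x := hG.dist_triangle
    _ = s + sInf T := by omega
  · -- s + sInf T ≤ dist v x
    have h3 : sInf T ≤ i + G.dist u x := Nat.sInf_le hmemT
    have h4 : G.dist v u = G.dist u v := SimpleGraph.dist_comm ..
    omega
end

section
/- Let G be a connected graph, let X be a separator of G with diam_G(X) ≤ d, let V₁, V₂ partition V(G) \ X with no edges between them, and let X' ⊆ X ∪ V₂ with diam_G(X') ≤ d. Let v ∈ V₁ with projection Pr_{v,d}(X) = (X₀,...,X_d). Define s = min over x ∈ X' of min over i of (i + dist_G(X_i,x)), and X'_i = {x ∈ X' : min over j of (j + dist_G(X_j,x)) = s + i}. Then Pr_{v,d}(X') = (X'₀,...,X'_d). -/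
noncomputable def eSetDist {V : Type*} (G : SimpleGraph V) (S : Set V) (x : V) : ℕ∞ :=
  sInf {m | ∃ u ∈ S, m = (G.dist u x : ℕ∞)}

private lemma setDist_le' {V : Type*} (G : SimpleGraph V) {S : Set V} {u : V} (x : V)
    (hu : u ∈ S) : setDist G S x ≤ G.dist u x :=
  Nat.sInf_le ⟨u, hu, rfl⟩

private lemma setDist_spec {V : Type*} (G : SimpleGraph V) {S : Set V} (x : V)
    (h : S.Nonempty) : ∃ u ∈ S, setDist G S x = G.dist u x := by
  obtain ⟨u, hu⟩ := h
  have hne : ({m | ∃ u ∈ S, m = G.dist u x}).Nonempty := ⟨G.dist u x, u, hu, rfl⟩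
  exact Nat.sInf_mem hne

private lemma eSetDist_eq_coe {V : Type*} (G : SimpleGraph V) {S : Set V} (x : V)
    (h : S.Nonempty) : eSetDist G S x = (setDist G S x : ℕ∞) := by
  apply le_antisymm
  · obtain ⟨u, hu, he⟩ := setDist_spec G x h
    rw [he]
    exact sInf_le ⟨u, hu, rfl⟩
  · refine le_sInf ?_
    rintro e ⟨u, hu, rfl⟩
    exact_mod_cast setDist_le' G x hu

private lemma eSetDist_empty {V : Type*} (G : SimpleGraph V) (x : V) :
    eSetDist G (∅ : Set V) x = ⊤ := by
  simp [eSetDist]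

private lemma cross {V : Type*} {G : SimpleGraph V} {X V₁ V₂ : Set V}
    (hpart : V₁ ∪ V₂ = Xᶜ) (hdisj : Disjoint V₁ V₂)
    (hnoedge : ∀ u ∈ V₁, ∀ w ∈ V₂, ¬ G.Adj u w) :
    ∀ (a x : V) (p : G.Walk a x), a ∈ V₁ → x ∈ X ∪ V₂ →
      ∃ u ∈ X, ∃ (q : G.Walk a u) (r : G.Walk u x), q.length + r.length = p.length := by
  intro a x p
  induction p with
  | nil =>
    rename_i c
    intro ha hx
    exfalso
    have haX : c ∉ X := by
      have hc : c ∈ Xᶜ := by rw [← hpart]; exact Or.inl ha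
      exact hc
    rcases hx with hx | hx
    · exact haX hx
    · exact Set.disjoint_left.mp hdisj ha hx
  | @cons a b x h p ih =>
    intro ha hx
    by_cases hbX : b ∈ X
    · refine ⟨b, hbX, SimpleGraph.Walk.cons h SimpleGraph.Walk.nil, p, ?_⟩
      simp only [SimpleGraph.Walk.length_cons, SimpleGraph.Walk.length_nil]
      omega
    · have hb : b ∈ V₁ ∪ V₂ := by
        rw [hpart]; exact hbX
      rcases hb with hb | hb
      · obtain ⟨u, hu, q, r, hl⟩ := ih hb hx
        refine ⟨u, hu, SimpleGraph.Walk.cons h q, r, ?_⟩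
        simp [SimpleGraph.Walk.length_cons]
        omega
      · exact absurd h (hnoedge a ha b hb)

theorem stmt13 {V : Type*} (G : SimpleGraph V) (hG : G.Connected)
    (X V₁ V₂ : Set V) (d : ℕ)
    (hpart : V₁ ∪ V₂ = Xᶜ) (hdisj : Disjoint V₁ V₂)
    (h1 : V₁.Nonempty) (h2 : V₂.Nonempty)
    (hnoedge : ∀ u ∈ V₁, ∀ w ∈ V₂, ¬ G.Adj u w)
    (hXne : X.Nonempty) (hdiamX : ∀ a ∈ X, ∀ b ∈ X, G.dist a b ≤ d)
    (X' : Set V) (hX'sub : X' ⊆ X ∪ V₂) (hX'ne : X'.Nonempty)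
    (hdiamX' : ∀ a ∈ X', ∀ b ∈ X', G.dist a b ≤ d)
    (v : V) (hv : v ∈ V₁) :
    ∀ i ≤ d,
      projClass G X' v i =
      {x ∈ X' |
        sInf {e : ℕ∞ | ∃ j ≤ d, e = (j : ℕ∞) + eSetDist G (projClass G X v j) x} =
        sInf {e : ℕ∞ | ∃ y ∈ X',
          e = sInf {e' : ℕ∞ | ∃ j ≤ d,
                e' = (j : ℕ∞) + eSetDist G (projClass G X v j) y}} + (i : ℕ∞)} := by
  intro i hi
  set D := setDist G X v with hD
  have hDle : ∀ u ∈ X, D ≤ G.dist v u := by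
    intro u hu
    rw [SimpleGraph.dist_comm]
    exact setDist_le' G v hu
  obtain ⟨u₀, hu₀, hu₀D⟩ := setDist_spec G v hXne
  -- crossing a shortest path
  have cross_dist : ∀ x ∈ X ∪ V₂, ∃ u ∈ X, G.dist v u + G.dist u x = G.dist v x := by
    intro x hx
    obtain ⟨p, hp⟩ := hG.exists_walk_length_eq_dist v x
    obtain ⟨u, hu, q, r, hl⟩ := cross hpart hdisj hnoedge v x p hv hx
    have h1' : G.dist v u ≤ q.length := SimpleGraph.dist_le q
    have h2' : G.dist u x ≤ r.length := SimpleGraph.dist_le r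
    have h3' : G.dist v x ≤ G.dist v u + G.dist u x := hG.dist_triangle
    exact ⟨u, hu, by omega⟩
  -- key : the inner inf computes the distance
  have key : ∀ x ∈ X ∪ V₂,
      sInf {e : ℕ∞ | ∃ j ≤ d, e = (j : ℕ∞) + eSetDist G (projClass G X v j) x} =
        ((G.dist v x - D : ℕ) : ℕ∞) := by
    intro x hx
    obtain ⟨u, hu, hsum⟩ := cross_dist x hx
    have hvu : D ≤ G.dist v u := hDle u hu
    set j := G.dist v u - D with hjdef
    have hj : G.dist v u = D + j := by omega
    have hjd : j ≤ d := by
      have ht : G.dist v u ≤ G.dist v u₀ + G.dist u₀ u := hG.dist_triangle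
      have hdd : G.dist u₀ u ≤ d := hdiamX u₀ hu₀ u hu
      have hvu₀ : G.dist v u₀ = D := by rw [SimpleGraph.dist_comm]; exact hu₀D.symm
      omega
    have humem : u ∈ projClass G X v j := ⟨hu, hj⟩
    apply le_antisymm
    · calc sInf {e : ℕ∞ | ∃ j ≤ d, e = (j : ℕ∞) + eSetDist G (projClass G X v j) x}
          ≤ (j : ℕ∞) + eSetDist G (projClass G X v j) x := sInf_le ⟨j, hjd, rfl⟩
        _ ≤ (j : ℕ∞) + (G.dist u x : ℕ∞) := by
            have hle : eSetDist G (projClass G X v j) x ≤ (G.dist u x : ℕ∞) := by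
              unfold eSetDist
              exact sInf_le ⟨u, humem, rfl⟩
            exact add_le_add_right hle _
        _ = ((G.dist v x - D : ℕ) : ℕ∞) := by
            norm_cast
            omega
    · refine le_sInf ?_
      rintro e ⟨j', hj', rfl⟩
      rcases Set.eq_empty_or_nonempty (projClass G X v j') with he | hne
      · rw [he, eSetDist_empty]
        simp
      · rw [eSetDist_eq_coe G x hne]
        obtain ⟨u', hu', hval⟩ := setDist_spec G x hne
        have hu'd : G.dist v u' = D + j' := hu'.2
        have ht : G.dist v x ≤ G.dist v u' + G.dist u' x := hG.dist_triangle
        norm_cast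
        omega
  -- distances from v to X' are ≥ D
  have hX'D : ∀ y ∈ X', D ≤ G.dist v y := by
    intro y hy
    obtain ⟨u, hu, hsum⟩ := cross_dist y (hX'sub hy)
    have := hDle u hu
    omega
  set D' := setDist G X' v with hD'
  obtain ⟨y₀, hy₀, hy₀D⟩ := setDist_spec G v hX'ne
  have hy₀D' : G.dist v y₀ = D' := by rw [SimpleGraph.dist_comm]; exact hy₀D.symm
  have hD'le : ∀ y ∈ X', D' ≤ G.dist v y := by
    intro y hy
    rw [SimpleGraph.dist_comm]
    exact setDist_le' G v hy
  have hDD' : D ≤ D' := by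
    have := hX'D y₀ hy₀
    omega
  have hsinner : sInf {e : ℕ∞ | ∃ y ∈ X',
      e = sInf {e' : ℕ∞ | ∃ j ≤ d,
            e' = (j : ℕ∞) + eSetDist G (projClass G X v j) y}} = ((D' - D : ℕ) : ℕ∞) := by
    apply le_antisymm
    · have : sInf {e : ℕ∞ | ∃ y ∈ X',
          e = sInf {e' : ℕ∞ | ∃ j ≤ d,
                e' = (j : ℕ∞) + eSetDist G (projClass G X v j) y}} ≤
            sInf {e' : ℕ∞ | ∃ j ≤ d,
                e' = (j : ℕ∞) + eSetDist G (projClass G X v j) y₀} := sInf_le ⟨y₀, hy₀, rfl⟩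
      rw [key y₀ (hX'sub hy₀), hy₀D'] at this
      exact this
    · refine le_sInf ?_
      rintro e ⟨y, hy, rfl⟩
      rw [key y (hX'sub hy)]
      have h1' := hD'le y hy
      have h2' := hX'D y hy
      norm_cast
      omega
  ext x
  constructor
  · rintro ⟨hx, hdx⟩
    rw [← hD'] at hdx
    refine ⟨hx, ?_⟩
    rw [key x (hX'sub hx), hsinner]
    have h1' := hX'D x hx
    have h2' := hD'le x hx
    norm_cast
    omega
  · rintro ⟨hx, hdx⟩
    rw [key x (hX'sub hx), hsinner] at hdx
    refine ⟨hx, ?_⟩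
    rw [← hD']
    have h1' := hX'D x hx
    have h2' := hD'le x hx
    have hdx' : G.dist v x - D = (D' - D) + i := by exact_mod_cast hdx
    omega
end
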